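/- Define α(p) = (p·(a+1))^{m₀/2 − 1} where a = ⌈4·log(1/p)⌉ and m₀ = max{m : 2^m·(a+1) ≤ (n−a)/2} with n = ⌊1/p⌋. Then log α(p) ∼ −log²(1/p)/(2·log 2) as p → 0⁺. -/

import Mathlib

open Filter

/-- `a(p) = ⌈4 log(1/p)⌉`. -/
noncomputable def aParam (p : ℝ) : ℕ := ⌈4 * Real.log (1 / p)⌉₊

/-- `n(p) = ⌊1/p⌋`. -/
noncomputable def nParam (p : ℝ) : ℕ := ⌊1 / p⌋₊

/-- `m₀(p) = max{m : 2^m (a+1) ≤ (n-a)/2}`. -/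
noncomputable def m0Param (p : ℝ) : ℕ :=
  sSup {m : ℕ | (2 : ℝ) ^ m * ((aParam p : ℝ) + 1) ≤ ((nParam p : ℝ) - (aParam p : ℝ)) / 2}

/-- `α(p) = (p (a+1))^{m₀/2 - 1}`. -/
noncomputable def alphaParam (p : ℝ) : ℝ :=
  (p * ((aParam p : ℝ) + 1)) ^ ((m0Param p : ℝ) / 2 - 1)

lemma m0_spec (p : ℝ)
    (hne : (aParam p : ℝ) + 1 ≤ ((nParam p : ℝ) - (aParam p : ℝ)) / 2) :
    (2 : ℝ) ^ (m0Param p) * ((aParam p : ℝ) + 1)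
        ≤ ((nParam p : ℝ) - (aParam p : ℝ)) / 2 ∧
      ((nParam p : ℝ) - (aParam p : ℝ)) / 2
        < (2 : ℝ) ^ (m0Param p + 1) * ((aParam p : ℝ) + 1) := by
  set S := {m : ℕ | (2 : ℝ) ^ m * ((aParam p : ℝ) + 1) ≤ ((nParam p : ℝ) - (aParam p : ℝ)) / 2}
    with hS
  have ha0 : (0 : ℝ) ≤ (aParam p : ℝ) := Nat.cast_nonneg _
  have hSne : S.Nonempty :=
    ⟨0, by simp only [hS, Set.mem_setOf_eq, pow_zero, one_mul]; exact hne⟩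
  have hbdd : BddAbove S := by
    refine ⟨nParam p, fun m hm => ?_⟩
    have hm' : (2 : ℝ) ^ m * ((aParam p : ℝ) + 1) ≤ ((nParam p : ℝ) - (aParam p : ℝ)) / 2 := hm
    have h1 : (m : ℝ) < (2 : ℝ) ^ m := by
      have := @Nat.lt_two_pow_self m
      exact_mod_cast this
    have h2 : (2 : ℝ) ^ m ≤ (2 : ℝ) ^ m * ((aParam p : ℝ) + 1) := by
      nlinarith [pow_pos (by norm_num : (0:ℝ) < 2) m]
    have h3 : ((nParam p : ℝ) - (aParam p : ℝ)) / 2 ≤ (nParam p : ℝ) := by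
      have := pow_pos (by norm_num : (0:ℝ) < 2) m
      nlinarith
    have : (m : ℝ) < (nParam p : ℝ) := by linarith
    exact_mod_cast this.le
  have hmem : m0Param p ∈ S := Nat.sSup_mem hSne hbdd
  have hnot : m0Param p + 1 ∉ S := by
    intro h
    have := le_csSup hbdd h
    have : m0Param p + 1 ≤ m0Param p := this
    omega
  exact ⟨hmem, lt_of_not_ge hnot⟩

lemma key_bounds (p : ℝ) (hp : 0 < p) (hL : 45 ≤ Real.log (1 / p)) :
    ((m0Param p : ℝ) - 2) * Real.log 2 ≤ Real.log (1 / p) ∧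
    Real.log (1 / p) - Real.log (12 * Real.log (1 / p)) - 4 * Real.log 2
        ≤ ((m0Param p : ℝ) - 2) * Real.log 2 ∧
    Real.log ((aParam p : ℝ) + 1) ≤ Real.log (6 * Real.log (1 / p)) := by
  set L := Real.log (1 / p) with hLdef
  have hL0 : (0 : ℝ) < L := by linarith
  have hinv : (0 : ℝ) < 1 / p := by positivity
  have hexpL : Real.exp L = 1 / p := Real.exp_log hinv
  have hexp2 : (L / 2 + 1) ^ 2 ≤ Real.exp L := by
    have h1 : L / 2 + 1 ≤ Real.exp (L / 2) := Real.add_one_le_exp _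
    have h2 : Real.exp (L / 2) * Real.exp (L / 2) = Real.exp L := by
      rw [← Real.exp_add]; ring_nf
    nlinarith [Real.exp_pos (L / 2)]
  -- a bounds
  have ha1 : 4 * L ≤ (aParam p : ℝ) := Nat.le_ceil _
  have ha2 : (aParam p : ℝ) < 4 * L + 1 := by
    have := Nat.ceil_lt_add_one (by positivity : (0:ℝ) ≤ 4 * L)
    simpa [aParam, hLdef] using this
  -- n bounds
  have hn1 : (nParam p : ℝ) ≤ 1 / p := Nat.floor_le hinv.le
  have hn2 : 1 / p < (nParam p : ℝ) + 1 := Nat.lt_floor_add_one _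
  -- nonemptiness of S
  have hne : (aParam p : ℝ) + 1 ≤ ((nParam p : ℝ) - (aParam p : ℝ)) / 2 := by
    nlinarith
  obtain ⟨hub, hlb⟩ := m0_spec p hne
  set m := m0Param p
  -- upper bound on m₀
  have h2m : (2 : ℝ) ^ m ≤ Real.exp L := by
    have hpow : (0:ℝ) < (2:ℝ) ^ m := pow_pos (by norm_num) m
    nlinarith
  have hup : (m : ℝ) * Real.log 2 ≤ L := by
    have := Real.log_le_log (by positivity) h2m
    rwa [Real.log_pow, Real.log_exp] at this
  have hlog2pos : (0 : ℝ) < Real.log 2 := Real.log_pos (by norm_num)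
  refine ⟨by nlinarith, ?_, ?_⟩
  · -- lower bound on m₀
    have h8 : Real.exp L / 2 ≤ Real.exp L - 4 * L - 2 := by nlinarith
    have hstep : Real.exp L / 2 < (2 : ℝ) ^ (m + 2) * (6 * L) := by
      have h1 : Real.exp L - 4 * L - 2 < (nParam p : ℝ) - (aParam p : ℝ) := by
        nlinarith
      have h2 : ((nParam p : ℝ) - (aParam p : ℝ)) < (2:ℝ) ^ (m + 2) * ((aParam p : ℝ) + 1) := by
        have hpow : (2:ℝ) ^ (m + 2) = 2 * (2:ℝ) ^ (m + 1) := by ring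
        rw [hpow]
        linarith [hlb]
      have h3 : (aParam p : ℝ) + 1 ≤ 6 * L := by nlinarith
      have hpow : (0:ℝ) < (2:ℝ) ^ (m + 2) := pow_pos (by norm_num) _
      have h4 : (2:ℝ) ^ (m + 2) * ((aParam p : ℝ) + 1) ≤ (2:ℝ) ^ (m + 2) * (6 * L) :=
        mul_le_mul_of_nonneg_left h3 hpow.le
      linarith
    have hstep2 : Real.exp L / (12 * L) < (2 : ℝ) ^ (m + 2) := by
      rw [div_lt_iff₀ (by positivity)]
      linarith
    have hloglt := Real.log_lt_log (by positivity) hstep2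
    rw [Real.log_pow, Real.log_div (by positivity) (by positivity), Real.log_exp] at hloglt
    push_cast at hloglt
    have hring : ((m : ℝ) + 2) * Real.log 2 = ((m : ℝ) - 2) * Real.log 2 + 4 * Real.log 2 := by
      ring
    linarith
  · -- log(a+1) ≤ log(6L)
    apply Real.log_le_log (by positivity)
    linarith

theorem log_alpha_asymptotics :
    Tendsto
      (fun p : ℝ => Real.log (alphaParam p) / (-(Real.log (1 / p)) ^ 2 / (2 * Real.log 2)))
      (nhdsWithin 0 (Set.Ioi 0)) (nhds 1) := by
  have hlog2pos : (0 : ℝ) < Real.log 2 := Real.log_pos (by norm_num)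
  have hLtop : Tendsto (fun p : ℝ => Real.log (1 / p)) (nhdsWithin 0 (Set.Ioi 0)) atTop := by
    have h := Real.tendsto_log_atTop.comp
      (tendsto_inv_nhdsGT_zero : Tendsto (fun x : ℝ => x⁻¹) _ _)
    exact h.congr fun p => by rw [Function.comp_apply, one_div]
  have hbase : ∀ᶠ p : ℝ in nhdsWithin 0 (Set.Ioi 0), 0 < p ∧ 45 ≤ Real.log (1 / p) := by
    filter_upwards [self_mem_nhdsWithin, hLtop.eventually_ge_atTop 45] with p h1 h2
    exact ⟨h1, h2⟩
  -- log x / x → 0 at top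
  have hlogdiv : Tendsto (fun x : ℝ => Real.log x / x) atTop (nhds 0) :=
    Real.isLittleO_log_id_atTop.tendsto_div_nhds_zero
  -- the lower-bound function for g tends to 1
  have haux : Tendsto
      (fun x : ℝ => (x - Real.log (12 * x) - 4 * Real.log 2) / x) atTop (nhds 1) := by
    have h1 : Tendsto (fun x : ℝ => 1 - (Real.log x / x + Real.log 12 / x + 4 * Real.log 2 / x))
        atTop (nhds 1) := by
      have h2 : Tendsto (fun x : ℝ => Real.log x / x + Real.log 12 / x + 4 * Real.log 2 / x)
          atTop (nhds 0) := by
        have c1 : Tendsto (fun x : ℝ => Real.log 12 / x) atTop (nhds 0) :=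
          (tendsto_const_nhds : Tendsto (fun _ : ℝ => Real.log 12) atTop _).div_atTop tendsto_id
        have c2 : Tendsto (fun x : ℝ => 4 * Real.log 2 / x) atTop (nhds 0) :=
          (tendsto_const_nhds : Tendsto (fun _ : ℝ => 4 * Real.log 2) atTop _).div_atTop tendsto_id
        have := (hlogdiv.add c1).add c2
        simpa using this
      simpa using tendsto_const_nhds.sub h2
    refine h1.congr' ?_
    filter_upwards [eventually_gt_atTop 0] with x hx
    rw [Real.log_mul (by norm_num) (ne_of_gt hx)]
    field_simp
    ring
  have hauxL : Tendsto
      (fun p : ℝ => (Real.log (1/p) - Real.log (12 * Real.log (1/p)) - 4 * Real.log 2)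
        / Real.log (1/p)) (nhdsWithin 0 (Set.Ioi 0)) (nhds 1) := haux.comp hLtop
  -- lower-bound function for h tends to 1
  have haux2 : Tendsto (fun x : ℝ => (x - Real.log (6 * x)) / x) atTop (nhds 1) := by
    have h2 : Tendsto (fun x : ℝ => Real.log x / x + Real.log 6 / x) atTop (nhds 0) := by
      have c1 : Tendsto (fun x : ℝ => Real.log 6 / x) atTop (nhds 0) :=
        (tendsto_const_nhds : Tendsto (fun _ : ℝ => Real.log 6) atTop _).div_atTop tendsto_id
      have := hlogdiv.add c1
      simpa using this
    have h1 : Tendsto (fun x : ℝ => 1 - (Real.log x / x + Real.log 6 / x)) atTop (nhds 1) := by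
      simpa using tendsto_const_nhds.sub h2
    refine h1.congr' ?_
    filter_upwards [eventually_gt_atTop 0] with x hx
    rw [Real.log_mul (by norm_num) (ne_of_gt hx)]
    field_simp
    ring
  have haux2L : Tendsto
      (fun p : ℝ => (Real.log (1/p) - Real.log (6 * Real.log (1/p))) / Real.log (1/p))
      (nhdsWithin 0 (Set.Ioi 0)) (nhds 1) := haux2.comp hLtop
  -- g tends to 1
  have hg : Tendsto
      (fun p : ℝ => ((m0Param p : ℝ) - 2) * Real.log 2 / Real.log (1/p))
      (nhdsWithin 0 (Set.Ioi 0)) (nhds 1) := by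
    apply tendsto_of_tendsto_of_tendsto_of_le_of_le' hauxL tendsto_const_nhds
    · filter_upwards [hbase] with p hp
      obtain ⟨hp0, hL⟩ := hp
      obtain ⟨h1, h2, h3⟩ := key_bounds p hp0 hL
      have hL0 : (0:ℝ) < Real.log (1/p) := by linarith
      exact div_le_div_of_nonneg_right h2 hL0.le
    · filter_upwards [hbase] with p hp
      obtain ⟨hp0, hL⟩ := hp
      obtain ⟨h1, h2, h3⟩ := key_bounds p hp0 hL
      have hL0 : (0:ℝ) < Real.log (1/p) := by linarith
      rw [div_le_one hL0]
      exact h1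
  -- h tends to 1
  have hh : Tendsto
      (fun p : ℝ => (Real.log (1/p) - Real.log ((aParam p : ℝ) + 1)) / Real.log (1/p))
      (nhdsWithin 0 (Set.Ioi 0)) (nhds 1) := by
    apply tendsto_of_tendsto_of_tendsto_of_le_of_le' haux2L tendsto_const_nhds
    · filter_upwards [hbase] with p hp
      obtain ⟨hp0, hL⟩ := hp
      obtain ⟨h1, h2, h3⟩ := key_bounds p hp0 hL
      have hL0 : (0:ℝ) < Real.log (1/p) := by linarith
      apply div_le_div_of_nonneg_right _ hL0.le
      linarith
    · filter_upwards [hbase] with p hp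
      obtain ⟨hp0, hL⟩ := hp
      have hL0 : (0:ℝ) < Real.log (1/p) := by linarith
      rw [div_le_one hL0]
      have : (0:ℝ) ≤ Real.log ((aParam p : ℝ) + 1) :=
        Real.log_nonneg (by have := Nat.cast_nonneg (α := ℝ) (aParam p); linarith)
      linarith
  have := hg.mul hh
  rw [mul_one] at this
  refine this.congr' ?_
  filter_upwards [hbase] with p hp
  obtain ⟨hp0, hL⟩ := hp
  have hL0 : (0:ℝ) < Real.log (1/p) := by linarith
  have ha0 : (0:ℝ) < (aParam p : ℝ) + 1 := by positivity
  have hlogα : Real.log (alphaParam p)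
      = ((m0Param p : ℝ) / 2 - 1) * (-(Real.log (1/p)) + Real.log ((aParam p : ℝ) + 1)) := by
    rw [alphaParam, Real.log_rpow (by positivity),
      Real.log_mul (ne_of_gt hp0) (ne_of_gt ha0)]
    rw [one_div, Real.log_inv]
    ring
  rw [hlogα]
  have hL0' : Real.log (1/p) ≠ 0 := ne_of_gt hL0
  field_simp
  ring
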